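/- Let n ≥ 1 and let f₁,…,fₙ, g₁,…,gₙ be homogeneous polynomials of degree 2 and N a homogeneous polynomial of degree 3 in ℂ[x₁,…,xₙ] with gᵢ(f₁,…,fₙ) = N·xᵢ for all i. Then for all indices i, j (equal or not), the polynomial xᵢ²·(∂N/∂xⱼ) belongs to the ideal I = (f₁,…,fₙ); in other words every partial derivative of N lies in the saturation of I. -/

import Mathlib

open MvPolynomial

/-- If `p` has zero constant coefficient, then `bind₁ f p` lies in the ideal
generated by the `f i`. -/
lemma bind₁_mem_span {n : ℕ} (f : Fin n → MvPolynomial (Fin n) ℂ)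
    (p : MvPolynomial (Fin n) ℂ) (hp : constantCoeff p = 0) :
    bind₁ f p ∈ Ideal.span (Set.range f) := by
  rw [p.as_sum, map_sum]
  apply Ideal.sum_mem
  intro s hs
  rw [bind₁_monomial]
  by_cases h0 : s = 0
  · subst h0
    rw [show coeff 0 p = 0 from hp]
    simp
  · obtain ⟨a, ha⟩ : ∃ a, s a ≠ 0 := by
      by_contra hcon
      push_neg at hcon
      exact h0 (Finsupp.ext hcon)
    have hdvd : f a ∣ ∏ i ∈ s.support, f i ^ s i := by
      refine dvd_trans (dvd_pow_self (f a) ha) ?_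
      exact Finset.dvd_prod_of_mem _ (Finsupp.mem_support_iff.2 ha)
    obtain ⟨c, hc⟩ := hdvd
    rw [hc, ← mul_assoc, mul_comm (C (coeff s p)) (f a), mul_assoc]
    exact Ideal.mul_mem_right _ _ (Ideal.subset_span ⟨a, rfl⟩)

/-- Chain rule for `bind₁`. -/
lemma pderiv_bind₁' {n : ℕ} (f : Fin n → MvPolynomial (Fin n) ℂ) (j : Fin n)
    (p : MvPolynomial (Fin n) ℂ) :
    pderiv j (bind₁ f p) = ∑ k, bind₁ f (pderiv k p) * pderiv j (f k) := by
  induction p using MvPolynomial.induction_on with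
  | C a => simp
  | add p q hp hq =>
      simp only [map_add, hp, hq, ← Finset.sum_add_distrib, add_mul]
  | mul_X p i hp =>
      have key : ∀ k : Fin n,
          bind₁ f (pderiv k p * X i + p * pderiv k (X i)) * pderiv j (f k)
            = bind₁ f (pderiv k p) * pderiv j (f k) * f i
              + (if k = i then bind₁ f p * pderiv j (f i) else 0) := by
        intro k
        by_cases hk : k = i
        · subst hk
          simp only [pderiv_X_self, mul_one, map_add, map_mul, bind₁_X_right, if_pos rfl, if_true]
          ring
        · simp only [pderiv_X_of_ne (Ne.symm hk), mul_zero, add_zero, map_mul,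
            bind₁_X_right, if_neg hk, add_zero]
          ring
      simp only [map_mul, bind₁_X_right, pderiv_mul, hp, Finset.sum_mul]
      rw [Finset.sum_congr rfl fun k _ => key k, Finset.sum_add_distrib,
        Finset.sum_ite_eq' Finset.univ i, if_pos (Finset.mem_univ i)]

/-- The constant coefficient of a partial derivative of a homogeneous
polynomial of degree `2` vanishes. -/
lemma cc_pderiv {n : ℕ} {q : MvPolynomial (Fin n) ℂ} (hq : q.IsHomogeneous 2)
    (k : Fin n) : constantCoeff (pderiv k q) = 0 := by
  classical
  rw [q.as_sum, map_sum, map_sum]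
  apply Finset.sum_eq_zero
  intro s _
  rw [pderiv_monomial, constantCoeff_monomial]
  split_ifs with h
  · by_cases hk : s k = 0
    · simp [hk]
    · have hle : ∀ m, s m ≤ (Finsupp.single k 1) m := by
        intro m
        have hm := DFunLike.congr_fun h m
        simp only [Finsupp.coe_tsub, Pi.sub_apply, Finsupp.coe_zero, Pi.zero_apply] at hm
        omega
      have hs : s = Finsupp.single k 1 := by
        ext m
        have := hle m
        by_cases hmk : m = k
        · subst hmk
          simp only [Finsupp.single_eq_same] at this ⊢
          omega
        · simp only [Finsupp.single_eq_of_ne' (Ne.symm hmk)] at this ⊢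
          omega
      have hdeg : (s : Fin n →₀ ℕ).degree ≠ 2 := by
        rw [hs]
        simp [Finsupp.degree_single]
      rw [hq.coeff_eq_zero hdeg]
      simp
  · rfl

/-- For a quadro-quadric Cremona transformation with lift `F = (f₁,…,fₙ)` and cubic
form `N`, one has `xᵢ² · ∂N/∂xⱼ ∈ (f₁,…,fₙ)` for all `i`, `j`; in other words the
partial derivatives of `N` lie in the saturation of the ideal `(f₁,…,fₙ)`. -/
theorem stmt3 (n : ℕ) (hn : 1 ≤ n)
    (f g : Fin n → MvPolynomial (Fin n) ℂ)
    (N : MvPolynomial (Fin n) ℂ)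
    (hf : ∀ i, (f i).IsHomogeneous 2) (hg : ∀ i, (g i).IsHomogeneous 2)
    (hN : N.IsHomogeneous 3)
    (hgf : ∀ i, bind₁ f (g i) = N * X i) :
    ∀ i j : Fin n,
      X i ^ 2 * pderiv j N ∈ Ideal.span (Set.range f) := by
  intro i j
  set I := Ideal.span (Set.range f) with hI
  -- `N * X i ∈ I`
  have hNXi : N * X i ∈ I := by
    rw [← hgf i]
    apply bind₁_mem_span
    have : ((0 : Fin n →₀ ℕ)).degree ≠ 2 := by simp [map_zero]
    exact (hg i).coeff_eq_zero this
  -- `pderiv j (N * X i) ∈ I`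
  have hpd : pderiv j (N * X i) ∈ I := by
    rw [← hgf i, pderiv_bind₁']
    apply Ideal.sum_mem
    intro k _
    apply Ideal.mul_mem_right
    exact bind₁_mem_span f _ (cc_pderiv (hg i) k)
  -- key algebraic identity
  have key : X i ^ 2 * pderiv j N
      = X i * pderiv j (N * X i) - pderiv j (X i) * (N * X i) := by
    rw [pderiv_mul]; ring
  rw [key]
  exact Ideal.sub_mem _ (Ideal.mul_mem_left _ _ hpd) (Ideal.mul_mem_left _ _ hNXi)
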